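/- (Theorem 1) For every h ∈ ℝⁿ, the operator 2-norm of the Fréchet derivative of the GRU state-transition map F at h satisfies ‖D F(h)‖₂ ≤ α + β ‖U_c‖₂, where α = δ_u (max_i |h_i| + max_i |c(h)_i|) ‖U_u‖₂ + max_i (1 − u(h)_i) and β = (max_i u(h)_i)(δ_r ‖U_r‖₂ max_i |h_i| + max_i r(h)_i), with δ_u = max_i u(h)_i (1 − u(h)_i) and δ_r = max_i r(h)_i (1 − r(h)_i). -/

import Mathlib

noncomputable section

/-- The sigmoid function `σ(t) = 1/(1+exp(-t))`. -/
def sigmoid (t : ℝ) : ℝ := 1 / (1 + Real.exp (-t))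

lemma sigmoid_pos (t : ℝ) : 0 < sigmoid t := by
  unfold sigmoid; positivity

lemma sigmoid_lt_one (t : ℝ) : sigmoid t < 1 := by
  unfold sigmoid
  rw [div_lt_one (by positivity)]
  linarith [Real.exp_pos (-t)]

lemma hasDerivAt_sigmoid (t : ℝ) :
    HasDerivAt sigmoid (sigmoid t * (1 - sigmoid t)) t := by
  have h1 : HasDerivAt (fun s : ℝ => 1 + Real.exp (-s)) (-Real.exp (-t)) t := by
    simpa using ((Real.hasDerivAt_exp (-t)).comp t ((hasDerivAt_id t).neg)).const_add 1
  have h0 : (1 : ℝ) + Real.exp (-t) ≠ 0 := by positivity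
  have h2 := ((hasDerivAt_const t (1:ℝ)).div h1 h0)
  refine (h2 : HasDerivAt sigmoid _ t).congr_deriv ?_
  symm
  unfold sigmoid
  field_simp
  ring

lemma hasDerivAt_tanh (t : ℝ) :
    HasDerivAt Real.tanh (1 - Real.tanh t ^ 2) t := by
  have h0 : Real.cosh t ≠ 0 := (Real.cosh_pos t).ne'
  have h := (Real.hasDerivAt_sinh t).div (Real.hasDerivAt_cosh t) h0
  have he : Real.tanh = fun s => Real.sinh s / Real.cosh s := by
    funext s; exact Real.tanh_eq_sinh_div_cosh s
  rw [he]
  refine (h : HasDerivAt (fun s => Real.sinh s / Real.cosh s) _ t).congr_deriv ?_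
  symm
  show 1 - (Real.sinh t / Real.cosh t) ^ 2 = _
  have hc := Real.cosh_sq_sub_sinh_sq t
  field_simp

lemma tanh_sq_le_one (t : ℝ) : Real.tanh t ^ 2 ≤ 1 := by
  rw [Real.tanh_eq_sinh_div_cosh, div_pow, div_le_one (by positivity)]
  nlinarith [Real.cosh_sq_sub_sinh_sq t]

lemma euclidean_diag_norm_le {n : ℕ} (a : Fin n → ℝ) (v w : EuclideanSpace ℝ (Fin n))
    (hw : ∀ i, w i = a i * v i)
    (K : ℝ) (hK0 : 0 ≤ K) (hK : ∀ i, |a i| ≤ K) :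
    ‖w‖ ≤ K * ‖v‖ := by
  rw [EuclideanSpace.norm_eq, EuclideanSpace.norm_eq]
  rw [show K * Real.sqrt (∑ i, ‖v i‖ ^ 2) = Real.sqrt (∑ i, K^2 * ‖v i‖ ^ 2) by
    rw [← Finset.mul_sum, Real.sqrt_mul (by positivity), Real.sqrt_sq hK0]]
  apply Real.sqrt_le_sqrt
  apply Finset.sum_le_sum
  intro i _
  have : ‖w i‖ = |a i| * ‖v i‖ := by rw [hw i]; simp [abs_mul]
  rw [this, mul_pow]
  have : |a i|^2 ≤ K^2 := by
    have := hK i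
    nlinarith [abs_nonneg (a i)]
  nlinarith [sq_nonneg (‖v i‖)]

lemma matCLM_apply {n : ℕ} (M : Matrix (Fin n) (Fin n) ℝ) (v : EuclideanSpace ℝ (Fin n)) (i : Fin n) :
    (Matrix.toEuclideanCLM (𝕜 := ℝ) M) v i = M.mulVec v i := by
  have := Matrix.ofLp_toEuclideanCLM (𝕜 := ℝ) M v
  exact congrFun this i

/-- The operator norm of a square matrix induced by the Euclidean norm. -/
def opNorm2 {n : ℕ} (M : Matrix (Fin n) (Fin n) ℝ) : ℝ :=
  ‖Matrix.toEuclideanCLM (𝕜 := ℝ) M‖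

set_option maxHeartbeats 2000000 in
/-- Theorem 1: for every `h`, the operator 2-norm of the Fréchet derivative of
the GRU state-transition map `F(h) = (1 - u(h)) ⊙ h + u(h) ⊙ c(h)` satisfies
`‖D F(h)‖₂ ≤ α + β ‖U_c‖₂`, where
`α = δ_u (max_i |h_i| + max_i |c(h)_i|) ‖U_u‖₂ + max_i (1 - u(h)_i)` and
`β = (max_i u(h)_i)(δ_r ‖U_r‖₂ max_i |h_i| + max_i r(h)_i)`, with
`δ_u = max_i u(h)_i (1 - u(h)_i)` and `δ_r = max_i r(h)_i (1 - r(h)_i)`. -/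
theorem gru_transition_deriv_norm_bound {n m : ℕ} (x : Fin m → ℝ)
    (Wr Wu Wc : Matrix (Fin n) (Fin m) ℝ) (Ur Uu Uc : Matrix (Fin n) (Fin n) ℝ)
    (br bu bc : EuclideanSpace ℝ (Fin n)) (h : EuclideanSpace ℝ (Fin n)) :
    let r : EuclideanSpace ℝ (Fin n) → EuclideanSpace ℝ (Fin n) :=
      fun h => WithLp.toLp 2 (fun i => sigmoid (Wr.mulVec x i + Ur.mulVec h i + br i))
    let u : EuclideanSpace ℝ (Fin n) → EuclideanSpace ℝ (Fin n) :=
      fun h => WithLp.toLp 2 (fun i => sigmoid (Wu.mulVec x i + Uu.mulVec h i + bu i))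
    let c : EuclideanSpace ℝ (Fin n) → EuclideanSpace ℝ (Fin n) :=
      fun h => WithLp.toLp 2 (fun i => Real.tanh (Wc.mulVec x i + Uc.mulVec (fun j => r h j * h j) i + bc i))
    let F : EuclideanSpace ℝ (Fin n) → EuclideanSpace ℝ (Fin n) :=
      fun h => WithLp.toLp 2 (fun i => (1 - u h i) * h i + u h i * c h i)
    let δu : ℝ := ⨆ i, u h i * (1 - u h i)
    let δr : ℝ := ⨆ i, r h i * (1 - r h i)
    let α : ℝ := δu * ((⨆ i, |h i|) + ⨆ i, |c h i|) * opNorm2 Uu + ⨆ i, (1 - u h i)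
    let β : ℝ := (⨆ i, u h i) * (δr * opNorm2 Ur * (⨆ i, |h i|) + ⨆ i, r h i)
    DifferentiableAt ℝ F h ∧ ‖fderiv ℝ F h‖ ≤ α + β * opNorm2 Uc := by
  intro r u c F δu δr α β
  -- row continuous linear maps
  let rowc : Matrix (Fin n) (Fin n) ℝ → Fin n → (EuclideanSpace ℝ (Fin n) →L[ℝ] ℝ) := fun M i =>
    (EuclideanSpace.proj i).comp (Matrix.toEuclideanCLM (𝕜 := ℝ) M)
  have rowc_apply : ∀ (M : Matrix (Fin n) (Fin n) ℝ) (i : Fin n) (v : EuclideanSpace ℝ (Fin n)), rowc M i v = M.mulVec v i := by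
    intro M i v
    simp only [rowc, ContinuousLinearMap.comp_apply, PiLp.proj_apply]
    exact matCLM_apply M v i
  have hproj : ∀ i : Fin n, HasFDerivAt (fun v : EuclideanSpace ℝ (Fin n) => v i) (EuclideanSpace.proj (𝕜 := ℝ) i : EuclideanSpace ℝ (Fin n) →L[ℝ] ℝ) h := by
    intro i
    have hfun : (fun v : EuclideanSpace ℝ (Fin n) => v i) = ⇑(EuclideanSpace.proj (𝕜 := ℝ) i) := by
      funext v; simp
    rw [hfun]
    exact (EuclideanSpace.proj (𝕜 := ℝ) i).hasFDerivAt
  have hrow : ∀ (M : Matrix (Fin n) (Fin n) ℝ) (i : Fin n),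
      HasFDerivAt (fun v : EuclideanSpace ℝ (Fin n) => M.mulVec v i) (rowc M i) h := by
    intro M i
    have hfun : (fun v : EuclideanSpace ℝ (Fin n) => M.mulVec v i) = ⇑(rowc M i) := by
      funext v; rw [rowc_apply]
    rw [hfun]
    exact (rowc M i).hasFDerivAt
  -- coordinate derivatives
  let dr : Fin n → (EuclideanSpace ℝ (Fin n) →L[ℝ] ℝ) := fun j => (r h j * (1 - r h j)) • rowc Ur j
  let du : Fin n → (EuclideanSpace ℝ (Fin n) →L[ℝ] ℝ) := fun i => (u h i * (1 - u h i)) • rowc Uu i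
  let dg : Fin n → (EuclideanSpace ℝ (Fin n) →L[ℝ] ℝ) := fun i =>
    ∑ j, Uc i j • (r h j • EuclideanSpace.proj (𝕜 := ℝ) j + h j • dr j)
  let dc : Fin n → (EuclideanSpace ℝ (Fin n) →L[ℝ] ℝ) := fun i => (1 - c h i ^ 2) • dg i
  let dF : Fin n → (EuclideanSpace ℝ (Fin n) →L[ℝ] ℝ) := fun i =>
    ((1 - u h i) • EuclideanSpace.proj (𝕜 := ℝ) i + h i • -(du i)) +
      (u h i • dc i + c h i • du i)
  have hr : ∀ j, HasFDerivAt (fun h' : EuclideanSpace ℝ (Fin n) => r h' j) (dr j) h := by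
    intro j
    have haff : HasFDerivAt (fun h' : EuclideanSpace ℝ (Fin n) => Wr.mulVec x j + Ur.mulVec h' j + br j)
        (rowc Ur j) h := ((hrow Ur j).const_add (Wr.mulVec x j)).add_const (br j)
    exact (hasDerivAt_sigmoid _).comp_hasFDerivAt h haff
  have hu : ∀ i, HasFDerivAt (fun h' : EuclideanSpace ℝ (Fin n) => u h' i) (du i) h := by
    intro i
    have haff : HasFDerivAt (fun h' : EuclideanSpace ℝ (Fin n) => Wu.mulVec x i + Uu.mulVec h' i + bu i)
        (rowc Uu i) h := ((hrow Uu i).const_add (Wu.mulVec x i)).add_const (bu i)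
    exact (hasDerivAt_sigmoid _).comp_hasFDerivAt h haff
  have hc : ∀ i, HasFDerivAt (fun h' : EuclideanSpace ℝ (Fin n) => c h' i) (dc i) h := by
    intro i
    have hsum : HasFDerivAt (fun h' : EuclideanSpace ℝ (Fin n) => ∑ j, Uc i j * (r h' j * h' j)) (dg i) h :=
      HasFDerivAt.fun_sum (fun j _ => (((hr j).mul (hproj j))).const_mul (Uc i j))
    have hfun : (fun h' : EuclideanSpace ℝ (Fin n) => Uc.mulVec (fun j => r h' j * h' j) i)
        = fun h' : EuclideanSpace ℝ (Fin n) => ∑ j, Uc i j * (r h' j * h' j) := by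
      funext h'; simp [Matrix.mulVec, dotProduct]
    have hmv : HasFDerivAt (fun h' : EuclideanSpace ℝ (Fin n) => Uc.mulVec (fun j => r h' j * h' j) i) (dg i) h := by
      rw [hfun]; exact hsum
    have haff : HasFDerivAt
        (fun h' : EuclideanSpace ℝ (Fin n) => Wc.mulVec x i + Uc.mulVec (fun j => r h' j * h' j) i + bc i)
        (dg i) h := (hmv.const_add (Wc.mulVec x i)).add_const (bc i)
    exact (hasDerivAt_tanh _).comp_hasFDerivAt h haff
  have hF : ∀ i, HasFDerivAt (fun h' : EuclideanSpace ℝ (Fin n) => F h' i) (dF i) h := by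
    intro i
    exact (((hu i).const_sub 1).mul (hproj i)).add ((hu i).mul (hc i))
  have Hpi : HasFDerivAt (fun (h' : EuclideanSpace ℝ (Fin n)) (i : Fin n) => F h' i) (ContinuousLinearMap.pi dF) h :=
    hasFDerivAt_pi.2 hF
  let L := PiLp.continuousLinearEquiv 2 ℝ (fun _ : Fin n => ℝ)
  let D : EuclideanSpace ℝ (Fin n) →L[ℝ] EuclideanSpace ℝ (Fin n) :=
    (L.symm : (Fin n → ℝ) →L[ℝ] EuclideanSpace ℝ (Fin n)).comp (ContinuousLinearMap.pi dF)
  have key : HasFDerivAt F D h := (L.symm.hasFDerivAt).comp h Hpi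
  refine ⟨key.differentiableAt, ?_⟩
  rw [key.fderiv]
  -- basic facts
  have hle : ∀ (f : Fin n → ℝ) (i : Fin n), f i ≤ ⨆ j, f j := fun f i =>
    le_ciSup (Set.Finite.bddAbove (Set.finite_range f)) i
  have hu0 : ∀ i, 0 < u h i := fun i => sigmoid_pos _
  have hu1 : ∀ i, u h i < 1 := fun i => sigmoid_lt_one _
  have hr0 : ∀ i, 0 < r h i := fun i => sigmoid_pos _
  have hr1 : ∀ i, r h i < 1 := fun i => sigmoid_lt_one _
  have hcs : ∀ i, c h i ^ 2 ≤ 1 := fun i => tanh_sq_le_one _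
  have hδu0 : (0:ℝ) ≤ δu := Real.iSup_nonneg fun i => by nlinarith [hu0 i, hu1 i]
  have hδr0 : (0:ℝ) ≤ δr := Real.iSup_nonneg fun i => by nlinarith [hr0 i, hr1 i]
  have hSU0 : (0:ℝ) ≤ ⨆ i, u h i := Real.iSup_nonneg fun i => (hu0 i).le
  have hSR0 : (0:ℝ) ≤ ⨆ i, r h i := Real.iSup_nonneg fun i => (hr0 i).le
  have hMH0 : (0:ℝ) ≤ ⨆ i, |h i| := Real.iSup_nonneg fun i => abs_nonneg _
  have hMC0 : (0:ℝ) ≤ ⨆ i, |c h i| := Real.iSup_nonneg fun i => abs_nonneg _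
  have hK10 : (0:ℝ) ≤ ⨆ i, (1 - u h i) := Real.iSup_nonneg fun i => by linarith [hu1 i]
  have hNU0 : (0:ℝ) ≤ opNorm2 Uu := by unfold opNorm2; exact norm_nonneg _
  have hNR0 : (0:ℝ) ≤ opNorm2 Ur := by unfold opNorm2; exact norm_nonneg _
  have hNC0 : (0:ℝ) ≤ opNorm2 Uc := by unfold opNorm2; exact norm_nonneg _
  refine ContinuousLinearMap.opNorm_le_bound D ?_ ?_
  · have hα : (0:ℝ) ≤ α :=
      add_nonneg (mul_nonneg (mul_nonneg hδu0 (add_nonneg hMH0 hMC0)) hNU0) hK10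
    have hβ : (0:ℝ) ≤ β :=
      mul_nonneg hSU0 (add_nonneg (mul_nonneg (mul_nonneg hδr0 hNR0) hMH0) hSR0)
    exact add_nonneg hα (mul_nonneg hβ hNC0)
  · intro v
    set Mu : EuclideanSpace ℝ (Fin n) := Matrix.toEuclideanCLM (𝕜 := ℝ) Uu v with hMud
    set Mr : EuclideanSpace ℝ (Fin n) := Matrix.toEuclideanCLM (𝕜 := ℝ) Ur v with hMrd
    set wv : EuclideanSpace ℝ (Fin n) :=
      WithLp.toLp 2 (fun j => r h j * v j + h j * (r h j * (1 - r h j) * Ur.mulVec v j)) with hwvd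
    set Mc : EuclideanSpace ℝ (Fin n) := Matrix.toEuclideanCLM (𝕜 := ℝ) Uc wv with hMcd
    set e1 : EuclideanSpace ℝ (Fin n) := WithLp.toLp 2 (fun i => (1 - u h i) * v i) with he1d
    set e2 : EuclideanSpace ℝ (Fin n) :=
      WithLp.toLp 2 (fun i => ((c h i - h i) * (u h i * (1 - u h i))) * Mu i) with he2d
    set e3 : EuclideanSpace ℝ (Fin n) :=
      WithLp.toLp 2 (fun i => (u h i * (1 - c h i ^ 2)) * Mc i) with he3d
    set wa : EuclideanSpace ℝ (Fin n) := WithLp.toLp 2 (fun j => r h j * v j) with hwad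
    set wb : EuclideanSpace ℝ (Fin n) :=
      WithLp.toLp 2 (fun j => (h j * (r h j * (1 - r h j))) * Mr j) with hwbd
    -- the derivative applied to v, coordinatewise
    have hgv : ∀ i, (dg i) v = Uc.mulVec wv i := by
      intro i
      simp only [dg, dr, ContinuousLinearMap.sum_apply, ContinuousLinearMap.smul_apply,
        ContinuousLinearMap.add_apply, smul_eq_mul, rowc_apply, PiLp.proj_apply]
      rw [hwvd]
      simp only [Matrix.mulVec, dotProduct]
      all_goals exact Finset.sum_congr rfl fun j _ => by ring
    have hDv : D v = e1 + (e2 + e3) := by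
      ext i
      have h1 : D v i = dF i v := rfl
      have h2 : (e1 + (e2 + e3)) i = e1 i + (e2 i + e3 i) := rfl
      rw [h1, h2]
      have h3 : dF i v = (1 - u h i) * v i + h i * -(u h i * (1 - u h i) * Uu.mulVec v i)
          + (u h i * ((1 - c h i ^ 2) * (Uc.mulVec wv i))
            + c h i * (u h i * (1 - u h i) * Uu.mulVec v i)) := by
        simp only [dF, dc, du, ContinuousLinearMap.add_apply, ContinuousLinearMap.smul_apply,
          ContinuousLinearMap.neg_apply, smul_eq_mul, rowc_apply, PiLp.proj_apply,
          hgv i]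
        all_goals ring
      rw [h3, he1d, he2d, he3d, hMud, hMcd]
      have h4 : (Matrix.toEuclideanCLM (𝕜 := ℝ) Uu) v i = Uu.mulVec v i := matCLM_apply _ _ _
      have h5 : (Matrix.toEuclideanCLM (𝕜 := ℝ) Uc) wv i = Uc.mulVec wv i := matCLM_apply _ _ _
      show _ = (1 - u h i) * v i + (((c h i - h i) * (u h i * (1 - u h i))) *
        ((Matrix.toEuclideanCLM (𝕜 := ℝ) Uu) v i) +
        ((u h i * (1 - c h i ^ 2)) * ((Matrix.toEuclideanCLM (𝕜 := ℝ) Uc) wv i)))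
      rw [h4, h5]
      ring
    -- norm bounds for the pieces
    have hMuB : ‖Mu‖ ≤ opNorm2 Uu * ‖v‖ :=
      (Matrix.toEuclideanCLM (𝕜 := ℝ) Uu).le_opNorm v
    have hMrB : ‖Mr‖ ≤ opNorm2 Ur * ‖v‖ :=
      (Matrix.toEuclideanCLM (𝕜 := ℝ) Ur).le_opNorm v
    have hMcB : ‖Mc‖ ≤ opNorm2 Uc * ‖wv‖ :=
      (Matrix.toEuclideanCLM (𝕜 := ℝ) Uc).le_opNorm wv
    have b1 : ‖e1‖ ≤ (⨆ i, (1 - u h i)) * ‖v‖ := by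
      refine euclidean_diag_norm_le (fun i => 1 - u h i) v e1 (fun i => by rw [he1d]) _ hK10 ?_
      intro i
      show |1 - u h i| ≤ ⨆ i, (1 - u h i)
      rw [abs_of_nonneg (by linarith [hu1 i])]
      exact hle (fun i => 1 - u h i) i
    have b2 : ‖e2‖ ≤ (δu * ((⨆ i, |h i|) + ⨆ i, |c h i|)) * ‖Mu‖ := by
      refine euclidean_diag_norm_le (fun i => (c h i - h i) * (u h i * (1 - u h i))) Mu e2
        (fun i => by rw [he2d]) _ (mul_nonneg hδu0 (add_nonneg hMH0 hMC0)) ?_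
      intro i
      show |(c h i - h i) * (u h i * (1 - u h i))| ≤ δu * ((⨆ i, |h i|) + ⨆ i, |c h i|)
      have h1 : |c h i - h i| ≤ (⨆ i, |h i|) + ⨆ i, |c h i| := by
        have ht := abs_sub (c h i) (h i)
        have h2 : |h i| ≤ ⨆ i, |h i| := hle (fun i => |h i|) i
        have h3 : |c h i| ≤ ⨆ i, |c h i| := hle (fun i => |c h i|) i
        linarith
      have h2 : u h i * (1 - u h i) ≤ δu := hle (fun i => u h i * (1 - u h i)) i
      have h4 : (0:ℝ) ≤ u h i * (1 - u h i) := by nlinarith [hu0 i, hu1 i]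
      rw [abs_mul, abs_of_nonneg h4]
      calc |c h i - h i| * (u h i * (1 - u h i))
          ≤ ((⨆ i, |h i|) + ⨆ i, |c h i|) * δu :=
            mul_le_mul h1 h2 h4 (add_nonneg hMH0 hMC0)
        _ = δu * ((⨆ i, |h i|) + ⨆ i, |c h i|) := mul_comm _ _
    have b3 : ‖e3‖ ≤ (⨆ i, u h i) * ‖Mc‖ := by
      refine euclidean_diag_norm_le (fun i => u h i * (1 - c h i ^ 2)) Mc e3
        (fun i => by rw [he3d]) _ hSU0 ?_
      intro i
      show |u h i * (1 - c h i ^ 2)| ≤ ⨆ i, u h i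
      have h4 : (0:ℝ) ≤ u h i * (1 - c h i ^ 2) := mul_nonneg (hu0 i).le (by linarith [hcs i])
      rw [abs_of_nonneg h4]
      have h5 : u h i * (1 - c h i ^ 2) ≤ u h i * 1 :=
        mul_le_mul_of_nonneg_left (by linarith [sq_nonneg (c h i)]) (hu0 i).le
      have h6 : u h i ≤ ⨆ i, u h i := hle (fun i => u h i) i
      linarith
    have bwa : ‖wa‖ ≤ (⨆ i, r h i) * ‖v‖ := by
      refine euclidean_diag_norm_le (fun j => r h j) v wa (fun j => by rw [hwad]) _ hSR0 ?_
      intro j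
      show |r h j| ≤ ⨆ i, r h i
      rw [abs_of_pos (hr0 j)]
      exact hle (fun i => r h i) j
    have bwb : ‖wb‖ ≤ ((⨆ i, |h i|) * δr) * ‖Mr‖ := by
      refine euclidean_diag_norm_le (fun j => h j * (r h j * (1 - r h j))) Mr wb
        (fun j => by rw [hwbd]) _ (mul_nonneg hMH0 hδr0) ?_
      intro j
      show |h j * (r h j * (1 - r h j))| ≤ (⨆ i, |h i|) * δr
      have h2 : r h j * (1 - r h j) ≤ δr := hle (fun j => r h j * (1 - r h j)) j
      have h4 : (0:ℝ) ≤ r h j * (1 - r h j) := by nlinarith [hr0 j, hr1 j]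
      have h5 : |h j| ≤ ⨆ i, |h i| := hle (fun i => |h i|) j
      rw [abs_mul, abs_of_nonneg h4]
      exact mul_le_mul h5 h2 h4 hMH0
    have hwvsplit : wv = wa + wb := by
      ext j
      have : (wa + wb) j = wa j + wb j := rfl
      rw [this, hwvd, hwad, hwbd]
      have h4 : Mr j = Ur.mulVec v j := matCLM_apply _ _ _
      show r h j * v j + h j * (r h j * (1 - r h j) * Ur.mulVec v j)
        = r h j * v j + (h j * (r h j * (1 - r h j))) * Mr j
      rw [h4]
      ring
    have bwv : ‖wv‖ ≤ (⨆ i, r h i) * ‖v‖ + ((⨆ i, |h i|) * δr) * (opNorm2 Ur * ‖v‖) := by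
      calc ‖wv‖ ≤ ‖wa‖ + ‖wb‖ := by rw [hwvsplit]; exact norm_add_le _ _
        _ ≤ (⨆ i, r h i) * ‖v‖ + ((⨆ i, |h i|) * δr) * (opNorm2 Ur * ‖v‖) :=
          add_le_add bwa (bwb.trans (mul_le_mul_of_nonneg_left hMrB (mul_nonneg hMH0 hδr0)))
    have b3' : ‖e3‖ ≤ (⨆ i, u h i) * (opNorm2 Uc *
        ((⨆ i, r h i) * ‖v‖ + ((⨆ i, |h i|) * δr) * (opNorm2 Ur * ‖v‖))) := by
      calc ‖e3‖ ≤ (⨆ i, u h i) * ‖Mc‖ := b3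
        _ ≤ (⨆ i, u h i) * (opNorm2 Uc * ‖wv‖) := mul_le_mul_of_nonneg_left hMcB hSU0
        _ ≤ _ := mul_le_mul_of_nonneg_left (mul_le_mul_of_nonneg_left bwv hNC0) hSU0
    have b2' : ‖e2‖ ≤ (δu * ((⨆ i, |h i|) + ⨆ i, |c h i|)) * (opNorm2 Uu * ‖v‖) :=
      b2.trans (mul_le_mul_of_nonneg_left hMuB (mul_nonneg hδu0 (add_nonneg hMH0 hMC0)))
    have hαd : α = δu * ((⨆ i, |h i|) + ⨆ i, |c h i|) * opNorm2 Uu + ⨆ i, (1 - u h i) := rfl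
    have hβd : β = (⨆ i, u h i) * (δr * opNorm2 Ur * (⨆ i, |h i|) + ⨆ i, r h i) := rfl
    calc ‖D v‖ = ‖e1 + (e2 + e3)‖ := by rw [hDv]
      _ ≤ ‖e1‖ + (‖e2‖ + ‖e3‖) :=
        (norm_add_le _ _).trans (add_le_add_right (norm_add_le _ _) _)
      _ ≤ (⨆ i, (1 - u h i)) * ‖v‖ +
          ((δu * ((⨆ i, |h i|) + ⨆ i, |c h i|)) * (opNorm2 Uu * ‖v‖) +
            (⨆ i, u h i) * (opNorm2 Uc *
              ((⨆ i, r h i) * ‖v‖ + ((⨆ i, |h i|) * δr) * (opNorm2 Ur * ‖v‖)))) :=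
        add_le_add b1 (add_le_add b2' b3')
      _ = (α + β * opNorm2 Uc) * ‖v‖ := by rw [hαd, hβd]; ring
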